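/- Let $N_t, N_r \ge 1$ be integers with $q = \min(N_t,N_r)$, and $\delta_t \ge 0$, $\delta_r \ge 0$ reals. Let $\Lambda$ be a nonnegative real random variable with $q\,\mathbb{E}[\Lambda] = N_r N_t$ and $\mathbb{E}[\Lambda^2] < \infty$, and define $C(\rho) = q\,\mathbb{E}\big[\log_2\big(1 + \frac{(\rho/N_t)\Lambda}{(\rho\delta_t^2/N_t)\Lambda + \rho\delta_r^2 + 1}\big)\big]$ for $\rho \ge 0$. Then $C$ is differentiable at $\rho = 0$ with $C'(0) = N_r/\ln 2$; consequently the minimum energy per information bit $\frac{E_b}{N_0}_{\min} = \lim_{\rho \to 0^+} \rho / C(\rho) = 1/C'(0)$ equals $\ln 2 / N_r$, independently of the impairment levels $\delta_t, \delta_r$. -/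

import Mathlib

open MeasureTheory Set Filter

lemma aux_log_bound (nt : ℝ) (hnt : 0 < nt) (ρ lam b c : ℝ)
    (hρ : 0 ≤ ρ) (hlam : 0 ≤ lam) (hb : 0 ≤ b) (hc : 0 ≤ c) :
    |Real.log (1 + (ρ / nt * lam) / ((ρ * b / nt) * lam + ρ * c + 1)) - ρ * lam / nt|
      ≤ ρ ^ 2 * (lam * (b * lam / nt + c) / nt + lam ^ 2 / nt ^ 2) := by
  set D : ℝ := (ρ * b / nt) * lam + ρ * c + 1 with hDdef
  have hX : 0 ≤ (ρ * b / nt) * lam + ρ * c := by positivity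
  have hD : 1 ≤ D := by simp [hDdef]; linarith
  have hD0 : 0 < D := lt_of_lt_of_le one_pos hD
  set a : ℝ := ρ * lam / nt with hadef
  have ha : 0 ≤ a := by positivity
  have hnum : ρ / nt * lam = a := by rw [hadef]; ring
  rw [hnum]
  set f : ℝ := a / D with hfdef
  have hf0 : 0 ≤ f := div_nonneg ha hD0.le
  have hfa : f ≤ a := div_le_self ha hD
  have h1f : (0:ℝ) < 1 + f := by linarith
  have hup : Real.log (1 + f) ≤ f := by
    have := Real.log_le_sub_one_of_pos h1f; linarith
  have hlow : f - f ^ 2 ≤ Real.log (1 + f) := by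
    have h := Real.log_le_sub_one_of_pos (show (0:ℝ) < (1 + f)⁻¹ by positivity)
    rw [Real.log_inv] at h
    have h2 : (1 + f)⁻¹ - 1 = -(f / (1 + f)) := by field_simp; ring
    rw [h2] at h
    have h4 : f / (1 + f) ≤ Real.log (1 + f) := by linarith
    have h3 : f - f ^ 2 ≤ f / (1 + f) := by
      rw [le_div_iff₀ h1f]; nlinarith [pow_nonneg hf0 3]
    linarith
  have hsub : a - f ≤ a * (D - 1) := by
    have he : a - f = a * (D - 1) / D := by
      field_simp [hfdef]; rw [hfdef, sub_mul, div_mul_cancel₀ a hD0.ne']; ring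
    rw [he]
    exact div_le_self (mul_nonneg ha (by linarith)) hD
  have hfsq : f ^ 2 ≤ a ^ 2 := by nlinarith
  have hRHS : ρ ^ 2 * (lam * (b * lam / nt + c) / nt + lam ^ 2 / nt ^ 2)
      = a * (D - 1) + a ^ 2 := by
    rw [hadef, hDdef]; field_simp; ring
  rw [hRHS, abs_le]
  constructor
  · nlinarith
  · nlinarith

/-- Low-SNR analysis: with `C(ρ) = q E[log₂(1 + SINR(ρ,Λ))]`,
`q E[Λ] = N_r N_t` and `E[Λ²] < ∞`, the capacity is differentiable at `ρ = 0`
(from the right) with `C'(0) = N_r / ln 2`; consequently the minimum energy per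
information bit `lim_{ρ→0⁺} ρ / C(ρ)` equals `ln 2 / N_r`, independently of the
impairment levels. -/
theorem min_energy_per_bit
    {Ω : Type*} [MeasureSpace Ω] [IsProbabilityMeasure (volume : Measure Ω)]
    (Nt Nr : ℕ) (hNt : 1 ≤ Nt) (hNr : 1 ≤ Nr)
    (q : ℕ) (hq : q = min Nt Nr)
    (δt δr : ℝ) (hδt : 0 ≤ δt) (hδr : 0 ≤ δr)
    (Λ : Ω → ℝ) (hΛmeas : Measurable Λ) (hΛnonneg : ∀ ω, 0 ≤ Λ ω)
    (hΛsq : Integrable (fun ω => Λ ω ^ 2))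
    (hmom1 : (q : ℝ) * ∫ ω, Λ ω = Nr * Nt)
    (C : ℝ → ℝ)
    (hC : ∀ ρ : ℝ, C ρ = q * ∫ ω, Real.logb 2
        (1 + (ρ / Nt * Λ ω) / ((ρ * δt ^ 2 / Nt) * Λ ω + ρ * δr ^ 2 + 1))) :
    HasDerivWithinAt C ((Nr : ℝ) / Real.log 2) (Ici 0) 0 ∧
      Tendsto (fun ρ : ℝ => ρ / C ρ) (nhdsWithin 0 (Ioi 0))
        (nhds (Real.log 2 / Nr)) := by
  have hnt : (0:ℝ) < Nt := by exact_mod_cast Nat.lt_of_lt_of_le Nat.zero_lt_one hNt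
  have hnr : (0:ℝ) < Nr := by exact_mod_cast Nat.lt_of_lt_of_le Nat.zero_lt_one hNr
  have hq1 : 1 ≤ q := by rw [hq]; exact le_min hNt hNr
  have hqpos : (0:ℝ) < q := by exact_mod_cast Nat.lt_of_lt_of_le Nat.zero_lt_one hq1
  have hlog2 : 0 < Real.log 2 := Real.log_pos one_lt_two
  -- Λ is integrable
  have hΛint : Integrable Λ := by
    apply Integrable.mono' ((integrable_const (1:ℝ)).add hΛsq) hΛmeas.aestronglyMeasurable
    filter_upwards with ω
    simp only [Pi.add_apply]
    rw [Real.norm_eq_abs, abs_of_nonneg (hΛnonneg ω)]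
    nlinarith [hΛnonneg ω, sq_nonneg (Λ ω - 1)]
  -- the dominating function K
  set K : Ω → ℝ := fun ω => Λ ω * (δt ^ 2 * Λ ω / Nt + δr ^ 2) / Nt + Λ ω ^ 2 / (Nt:ℝ) ^ 2
    with hKdef
  have hKint : Integrable K := by
    have he : K = fun ω => (δt ^ 2 / Nt / Nt + 1 / (Nt:ℝ) ^ 2) * Λ ω ^ 2
        + (δr ^ 2 / Nt) * Λ ω := by
      funext ω; rw [hKdef]; field_simp; ring
    rw [he]
    exact (hΛsq.const_mul _).add (hΛint.const_mul _)
  have hKnonneg : ∀ ω, 0 ≤ K ω := by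
    intro ω
    have hlm := hΛnonneg ω
    exact add_nonneg
      (div_nonneg (mul_nonneg hlm (add_nonneg (div_nonneg (mul_nonneg (sq_nonneg δt) hlm) hnt.le)
        (sq_nonneg δr))) hnt.le)
      (div_nonneg (sq_nonneg _) (sq_nonneg _))
  set MK : ℝ := ∫ ω, K ω with hMKdef
  have hMK : 0 ≤ MK := integral_nonneg hKnonneg
  set B : ℝ := q * MK / Real.log 2 with hBdef
  have hB : 0 ≤ B := by positivity
  -- main estimate
  have key : ∀ ρ : ℝ, 0 ≤ ρ → |C ρ - ρ * ((Nr:ℝ) / Real.log 2)| ≤ ρ ^ 2 * B := by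
    intro ρ hρ
    set L : Ω → ℝ := fun ω =>
      Real.log (1 + (ρ / Nt * Λ ω) / ((ρ * δt ^ 2 / Nt) * Λ ω + ρ * δr ^ 2 + 1)) with hLdef
    have hbound : ∀ ω, |L ω - ρ * Λ ω / Nt| ≤ ρ ^ 2 * K ω := fun ω =>
      aux_log_bound Nt hnt ρ (Λ ω) (δt ^ 2) (δr ^ 2) hρ (hΛnonneg ω) (sq_nonneg _) (sq_nonneg _)
    have hLmeas : AEStronglyMeasurable L volume := by
      have hm : Measurable fun ω =>
          1 + (ρ / Nt * Λ ω) / ((ρ * δt ^ 2 / Nt) * Λ ω + ρ * δr ^ 2 + 1) := by fun_prop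
      exact (Real.measurable_log.comp hm).aestronglyMeasurable
    have haint : Integrable (fun ω => ρ * Λ ω / Nt) := (hΛint.const_mul ρ).div_const Nt
    have hLnn : ∀ ω, 0 ≤ L ω := by
      intro ω
      apply Real.log_nonneg
      have hD : (0:ℝ) < (ρ * δt ^ 2 / Nt) * Λ ω + ρ * δr ^ 2 + 1 := by
        have := hΛnonneg ω
        have h1 : 0 ≤ (ρ * δt ^ 2 / Nt) * Λ ω := by positivity
        have h2 : 0 ≤ ρ * δr ^ 2 := by positivity
        linarith
      have hfnn : 0 ≤ (ρ / Nt * Λ ω) / ((ρ * δt ^ 2 / Nt) * Λ ω + ρ * δr ^ 2 + 1) := by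
        apply div_nonneg _ hD.le
        have := hΛnonneg ω
        positivity
      linarith
    have hLint : Integrable L := by
      apply Integrable.mono' (haint.add (hKint.const_mul (ρ ^ 2))) hLmeas
      filter_upwards with ω
      have h := (abs_le.mp (hbound ω)).2
      simp only [Pi.add_apply]
      rw [Real.norm_eq_abs, abs_of_nonneg (hLnn ω)]
      linarith
    have hdiff : |(∫ ω, L ω) - ρ * (∫ ω, Λ ω) / Nt| ≤ ρ ^ 2 * MK := by
      have h1 : (∫ ω, ρ * Λ ω / Nt) = ρ * (∫ ω, Λ ω) / Nt := by
        rw [integral_div, integral_const_mul]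
      rw [← h1, ← integral_sub hLint haint]
      calc |∫ ω, (L ω - ρ * Λ ω / Nt)| ≤ ∫ ω, |L ω - ρ * Λ ω / Nt| := by
            simpa [Real.norm_eq_abs] using
              norm_integral_le_integral_norm (fun ω => L ω - ρ * Λ ω / Nt)
        _ ≤ ∫ ω, ρ ^ 2 * K ω := by
            apply integral_mono ((hLint.sub haint).abs) (hKint.const_mul _)
            intro ω; exact hbound ω
        _ = ρ ^ 2 * MK := by rw [integral_const_mul, hMKdef]
    have hCρ : C ρ = q * (∫ ω, L ω) / Real.log 2 := by
      rw [hC ρ]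
      simp only [Real.logb, hLdef]
      rw [integral_div]; ring
    have hNrv : (Nr:ℝ) = q * (∫ ω, Λ ω) / Nt := by
      field_simp
      linarith [hmom1]
    have heq : C ρ - ρ * ((Nr:ℝ) / Real.log 2)
        = (q / Real.log 2) * ((∫ ω, L ω) - ρ * (∫ ω, Λ ω) / Nt) := by
      rw [hCρ, hNrv]; ring
    rw [heq, abs_mul, abs_of_nonneg (by positivity : (0:ℝ) ≤ (q:ℝ) / Real.log 2)]
    calc (q / Real.log 2) * |(∫ ω, L ω) - ρ * (∫ ω, Λ ω) / Nt|
        ≤ (q / Real.log 2) * (ρ ^ 2 * MK) := by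
          apply mul_le_mul_of_nonneg_left hdiff (by positivity)
      _ = ρ ^ 2 * B := by rw [hBdef]; ring
  have hC0 : C 0 = 0 := by
    rw [hC 0]; simp
  -- tendsto of the slope
  have htend : Tendsto (fun ρ => C ρ / ρ) (nhdsWithin 0 (Ioi 0)) (nhds ((Nr:ℝ) / Real.log 2)) := by
    rw [tendsto_iff_dist_tendsto_zero]
    have hev : ∀ᶠ ρ in nhdsWithin (0:ℝ) (Ioi 0),
        dist (C ρ / ρ) ((Nr:ℝ) / Real.log 2) ≤ B * ρ := by
      filter_upwards [self_mem_nhdsWithin] with ρ (hρ : ρ ∈ Ioi 0)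
      have hρ0 : (0:ℝ) < ρ := hρ
      have h := key ρ hρ0.le
      rw [Real.dist_eq]
      have he : C ρ / ρ - (Nr:ℝ) / Real.log 2 = (C ρ - ρ * ((Nr:ℝ) / Real.log 2)) / ρ := by
        rw [sub_div, mul_div_cancel_left₀ _ (ne_of_gt hρ0)]
      rw [he, abs_div, abs_of_pos hρ0, div_le_iff₀ hρ0]
      calc |C ρ - ρ * ((Nr:ℝ) / Real.log 2)| ≤ ρ ^ 2 * B := h
        _ = B * ρ * ρ := by ring
    have hg : Tendsto (fun ρ : ℝ => B * ρ) (nhdsWithin (0:ℝ) (Ioi 0)) (nhds 0) := by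
      have : Tendsto (fun ρ : ℝ => B * ρ) (nhds 0) (nhds (B * 0)) :=
        (continuous_const.mul continuous_id).tendsto 0
      rw [mul_zero] at this
      exact this.mono_left nhdsWithin_le_nhds
    exact squeeze_zero' (Eventually.of_forall fun ρ => dist_nonneg) hev hg
  have hL0ne : (Nr:ℝ) / Real.log 2 ≠ 0 := ne_of_gt (by positivity)
  constructor
  · rw [hasDerivWithinAt_iff_tendsto_slope]
    have hset : Ici (0:ℝ) \ {0} = Ioi 0 := by
      ext x; simp [lt_iff_le_and_ne, eq_comm, and_comm]
    rw [hset]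
    apply htend.congr
    intro ρ
    rw [slope_def_field, hC0]
    ring
  · have h2 := htend.inv₀ hL0ne
    rw [inv_div] at h2
    apply h2.congr
    intro ρ
    rw [inv_div]
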